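/- arXiv:1607.02943 — 2 statements merged into one kernel-verified Lean document; each statement's English description precedes it below -/
import Mathlib

section
/- Let H be a Tonelli Hamiltonian on ℝⁿ × ℝⁿ with associated Tonelli Lagrangian L, λ > 0, and let Φᵗ be a complete flow of the λ-discounted Hamiltonian vector field. Let μ be a Borel probability measure on ℝⁿ × ℝⁿ with compact support which is invariant under Φᵗ (i.e. Φᵗ_*μ = μ for all t). Then ∫ ( L(x, ∂H/∂p(x,p)) + H(x,p) ) dμ(x,p) = 0; equivalently (by the Legendre–Fenchel equality), ∫ ⟨p, ∂H/∂p(x,p)⟩ dμ(x,p) = 0. -/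
open Set Filter MeasureTheory Real

noncomputable section

abbrev E (n : ℕ) : Type := EuclideanSpace ℝ (Fin n)

noncomputable def Hp {n : ℕ} (H : E n × E n → ℝ) (x p : E n) : E n :=
  gradient (fun q => H (x, q)) p

noncomputable def Hx {n : ℕ} (H : E n × E n → ℝ) (x p : E n) : E n :=
  gradient (fun y => H (y, p)) x

noncomputable def Lv {n : ℕ} (L : E n × E n → ℝ) (x v : E n) : E n :=
  gradient (fun w => L (x, w)) v

noncomputable def Lx {n : ℕ} (L : E n × E n → ℝ) (x v : E n) : E n :=
  gradient (fun y => L (y, v)) x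

/-- A Tonelli Hamiltonian. -/
def Tonelli {n : ℕ} (H : E n × E n → ℝ) : Prop :=
  ContDiff ℝ 2 H ∧
  (∀ x p v : E n, v ≠ 0 → 0 < (inner ℝ (fderiv ℝ (fun q => Hp H x q) p v) v : ℝ)) ∧
  (∀ A : ℝ, ∃ B : ℝ, 0 ≤ B ∧ ∀ x p : E n, A * ‖p‖ - B ≤ H (x, p))

/-- `L` is the Lagrangian associated to `H` by fiberwise Legendre-Fenchel transform. -/
def IsLagrangianOf {n : ℕ} (L H : E n × E n → ℝ) : Prop :=
  ∀ x v : E n, IsLUB {r : ℝ | ∃ p : E n, r = (inner ℝ p v : ℝ) - H (x, p)} (L (x, v))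

/-- A continuous piecewise `C¹` curve on `[a,b]`, with derivative `γ'`. -/
def PiecewiseC1 {n : ℕ} (a b : ℝ) (γ γ' : ℝ → E n) : Prop :=
  ContinuousOn γ (Set.Icc a b) ∧
  ∃ s : Finset ℝ,
    (∀ t ∈ Set.Icc a b, t ∉ s → HasDerivAt γ (γ' t) t) ∧
    ContinuousOn γ' (Set.Icc a b \ s) ∧
    ∃ C : ℝ, ∀ t ∈ Set.Icc a b, ‖γ' t‖ ≤ C

/-- `u` is λ-dominated by `L`. -/
def Dominated {n : ℕ} (lam : ℝ) (L : E n × E n → ℝ) (u : E n → ℝ) : Prop :=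
  ∀ a b : ℝ, a < b → ∀ γ γ' : ℝ → E n, PiecewiseC1 a b γ γ' →
    Real.exp (lam * b) * u (γ b) - Real.exp (lam * a) * u (γ a) ≤
      ∫ t in a..b, Real.exp (lam * t) * L (γ t, γ' t)

/-- `γ` is `(u,L)`-λ-calibrated on `[a,b]`. -/
def Calibrated {n : ℕ} (lam : ℝ) (L : E n × E n → ℝ) (u : E n → ℝ)
    (a b : ℝ) (γ γ' : ℝ → E n) : Prop :=
  Real.exp (lam * b) * u (γ b) - Real.exp (lam * a) * u (γ a) =
    ∫ t in a..b, Real.exp (lam * t) * L (γ t, γ' t)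

def intVec {n : ℕ} (k : Fin n → ℤ) : E n :=
  (EuclideanSpace.equiv (Fin n) ℝ).symm (fun i => (k i : ℝ))


/-- A complete flow of the λ-discounted Hamiltonian vector field of `H`. -/
def IsDiscountedFlow {n : ℕ} (lam : ℝ) (H : E n × E n → ℝ)
    (Φ : ℝ → E n × E n → E n × E n) : Prop :=
  Φ 0 = id ∧ (∀ t s : ℝ, ∀ z : E n × E n, Φ (t + s) z = Φ t (Φ s z)) ∧
  ∀ (z : E n × E n) (t : ℝ),
    HasDerivAt (fun s => (Φ s z).1) (Hp H (Φ t z).1 (Φ t z).2) t ∧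
    HasDerivAt (fun s => (Φ s z).2) (-Hx H (Φ t z).1 (Φ t z).2 - lam • (Φ t z).2) t


section AuxLemmas

lemma inner_Hp {n : ℕ} (H : E n × E n → ℝ) (x p v : E n) :
    (inner ℝ (Hp H x p) v : ℝ) = fderiv ℝ (fun q => H (x, q)) p v := by
  rw [Hp, gradient, InnerProductSpace.toDual_symm_apply]

lemma inner_Hx {n : ℕ} (H : E n × E n → ℝ) (x p v : E n) :
    (inner ℝ (Hx H x p) v : ℝ) = fderiv ℝ (fun y => H (y, p)) x v := by
  rw [Hx, gradient, InnerProductSpace.toDual_symm_apply]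

lemma contDiff_fx {n : ℕ} (H : E n × E n → ℝ) (hH : ContDiff ℝ 2 H) (x : E n) :
    ContDiff ℝ 2 (fun q : E n => H (x, q)) :=
  hH.comp (contDiff_const.prodMk contDiff_id)

lemma diff_Hp {n : ℕ} (H : E n × E n → ℝ) (hH : ContDiff ℝ 2 H) (x : E n) :
    Differentiable ℝ (Hp H x) := by
  have h1 : ContDiff ℝ 1 (fderiv ℝ (fun q : E n => H (x, q))) :=
    (contDiff_fx H hH x).fderiv_right (by norm_num)
  have h2 : Differentiable ℝ (fun L : (E n) →L[ℝ] ℝ =>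
      (InnerProductSpace.toDual ℝ (E n)).symm L) :=
    (InnerProductSpace.toDual ℝ
      (E n)).symm.toContinuousLinearEquiv.toContinuousLinearMap.differentiable
  exact h2.comp (h1.differentiable one_ne_zero)

lemma convex_ineq {n : ℕ} (H : E n × E n → ℝ) (hH : Tonelli H) (x p q : E n) :
    H (x, p) + (inner ℝ (Hp H x p) (q - p) : ℝ) ≤ H (x, q) := by
  rcases eq_or_ne q p with rfl | hqp
  · simp
  · set v := q - p with hv
    have hv0 : v ≠ 0 := sub_ne_zero.2 hqp
    set c : ℝ → E n := fun t => p + t • v with hc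
    have hline : ∀ t : ℝ, HasDerivAt c v t := by
      intro t
      have : HasDerivAt (fun t : ℝ => t • v) ((1:ℝ) • v) t :=
        (hasDerivAt_id t).smul_const v
      have := this.const_add p; rw [one_smul] at this; exact this
    set ψ : ℝ → ℝ := fun t => (inner ℝ (Hp H x (c t)) v : ℝ) with hψdef
    have hφ : ∀ t : ℝ, HasDerivAt (fun t => H (x, c t)) (ψ t) t := by
      intro t
      have hd := (((contDiff_fx H hH.1 x).differentiable two_ne_zero) (c t)).hasFDerivAt
      have := hd.comp_hasDerivAt t (hline t)
      simpa only [hψdef, inner_Hp, Function.comp_def] using this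
    have hψ : ∀ t : ℝ, HasDerivAt ψ
        (inner ℝ (fderiv ℝ (fun q => Hp H x q) (c t) v) v : ℝ) t := by
      intro t
      have hd := (diff_Hp H hH.1 x (c t)).hasFDerivAt
      have h1 : HasDerivAt (fun t => Hp H x (c t)) (fderiv ℝ (Hp H x) (c t) v) t :=
        hd.comp_hasDerivAt t (hline t)
      have h2 := (HasDerivAt.inner ℝ h1 (hasDerivAt_const t v))
      simpa [hψdef, real_inner_comm] using h2
    have hmono : StrictMono ψ := by
      apply strictMono_of_deriv_pos
      intro t
      rw [(hψ t).deriv]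
      exact hH.2.1 x (c t) v hv0
    have hcont : ContinuousOn (fun t => H (x, c t)) (Set.Icc 0 1) :=
      (fun t _ => ((hφ t).continuousAt.continuousWithinAt))
    obtain ⟨d, hd, hdeq⟩ := exists_hasDerivAt_eq_slope (fun t => H (x, c t)) ψ one_pos
      hcont (fun t _ => hφ t)
    have h0 : c 0 = p := by simp [hc]
    have h1 : c 1 = q := by simp [hc, hv]
    have hge : ψ 0 ≤ ψ d := (hmono.le_iff_le.2 hd.1.le)
    rw [h0, h1] at hdeq
    have : ψ d = H (x, q) - H (x, p) := by rw [hdeq]; ring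
    have hψ0 : ψ 0 = (inner ℝ (Hp H x p) (q - p) : ℝ) := by
      show (inner ℝ (Hp H x (c 0)) v : ℝ) = _
      rw [h0, hv]
    linarith

lemma legendre {n : ℕ} (H L : E n × E n → ℝ) (hH : Tonelli H) (hLH : IsLagrangianOf L H)
    (x p : E n) :
    L (x, Hp H x p) + H (x, p) = (inner ℝ p (Hp H x p) : ℝ) := by
  have hgr : IsGreatest {r : ℝ | ∃ p' : E n, r = (inner ℝ p' (Hp H x p) : ℝ) - H (x, p')}
      ((inner ℝ p (Hp H x p) : ℝ) - H (x, p)) := by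
    constructor
    · exact ⟨p, rfl⟩
    · rintro r ⟨p', rfl⟩
      have hcx := convex_ineq H hH x p p'
      have h2 : (inner ℝ (Hp H x p) (p' - p) : ℝ) =
          (inner ℝ p' (Hp H x p) : ℝ) - (inner ℝ p (Hp H x p) : ℝ) := by
        rw [real_inner_comm (p' - p) (Hp H x p), inner_sub_left]
      linarith
  have := (hLH x (Hp H x p)).unique hgr.isLUB
  linarith

lemma fderiv_split {n : ℕ} (H : E n × E n → ℝ) (hH : ContDiff ℝ 2 H) (w : E n × E n)
    (a b : E n) :
    fderiv ℝ H w (a, b) = (inner ℝ (Hx H w.1 w.2) a : ℝ) + (inner ℝ (Hp H w.1 w.2) b : ℝ) := by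
  have hdH := ((hH.differentiable two_ne_zero) w).hasFDerivAt
  have hL : HasFDerivAt (fun y : E n => H (y, w.2))
      ((fderiv ℝ H w).comp (ContinuousLinearMap.inl ℝ (E n) (E n))) w.1 :=
    hdH.comp w.1 (hasFDerivAt_prodMk_left w.1 w.2)
  have hR : HasFDerivAt (fun q : E n => H (w.1, q))
      ((fderiv ℝ H w).comp (ContinuousLinearMap.inr ℝ (E n) (E n))) w.2 :=
    hdH.comp w.2 (hasFDerivAt_prodMk_right w.1 w.2)
  have e1 : (inner ℝ (Hx H w.1 w.2) a : ℝ) = fderiv ℝ H w (a, 0) := by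
    rw [inner_Hx, hL.fderiv]; rfl
  have e2 : (inner ℝ (Hp H w.1 w.2) b : ℝ) = fderiv ℝ H w (0, b) := by
    rw [inner_Hp, hR.fderiv]; rfl
  rw [e1, e2, ← map_add]
  congr 1
  simp [Prod.mk_add_mk]

lemma flow_deriv {n : ℕ} (lam : ℝ) (H : E n × E n → ℝ) (hH : Tonelli H)
    (Φ : ℝ → E n × E n → E n × E n) (hΦ : IsDiscountedFlow lam H Φ) (z : E n × E n) (t : ℝ) :
    HasDerivAt (fun s => H (Φ s z))
      (-(lam * (inner ℝ (Φ t z).2 (Hp H (Φ t z).1 (Φ t z).2) : ℝ))) t := by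
  obtain ⟨h1, h2⟩ := hΦ.2.2 z t
  have hcurve : HasDerivAt (fun s => Φ s z)
      ((Hp H (Φ t z).1 (Φ t z).2, -Hx H (Φ t z).1 (Φ t z).2 - lam • (Φ t z).2)) t :=
    h1.prodMk h2
  have hdH := ((hH.1.differentiable two_ne_zero) (Φ t z)).hasFDerivAt
  have hcomp := hdH.comp_hasDerivAt t hcurve
  have heq : fderiv ℝ H (Φ t z)
        (Hp H (Φ t z).1 (Φ t z).2, -Hx H (Φ t z).1 (Φ t z).2 - lam • (Φ t z).2)
      = -(lam * (inner ℝ (Φ t z).2 (Hp H (Φ t z).1 (Φ t z).2) : ℝ)) := by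
    rw [fderiv_split H hH.1]
    simp only [inner_sub_right, inner_neg_right, real_inner_smul_right]
    rw [real_inner_comm ((Φ t z).2)]
    rw [real_inner_comm (Hx H (Φ t z).1 (Φ t z).2)]
    ring
  rwa [heq] at hcomp

lemma continuous_Hp {n : ℕ} (H : E n × E n → ℝ) (hH : ContDiff ℝ 2 H) :
    Continuous (fun z : E n × E n => Hp H z.1 z.2) := by
  have hrep : (fun z : E n × E n => Hp H z.1 z.2) = fun z : E n × E n =>
      (InnerProductSpace.toDual ℝ (E n)).symm
        ((fderiv ℝ H z).comp (ContinuousLinearMap.inr ℝ (E n) (E n))) := by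
    funext z
    have hdH := ((hH.differentiable two_ne_zero) z).hasFDerivAt
    have hR : HasFDerivAt (fun q : E n => H (z.1, q))
        ((fderiv ℝ H z).comp (ContinuousLinearMap.inr ℝ (E n) (E n))) z.2 :=
      hdH.comp z.2 (hasFDerivAt_prodMk_right z.1 z.2)
    rw [Hp, gradient, hR.fderiv]
  rw [hrep]
  have hfd : Continuous (fderiv ℝ H) := hH.continuous_fderiv two_ne_zero
  have hcomp : Continuous (fun L : (E n × E n) →L[ℝ] ℝ =>
      L.comp (ContinuousLinearMap.inr ℝ (E n) (E n))) :=
    ((ContinuousLinearMap.compL ℝ (E n) (E n × E n) ℝ).flip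
      (ContinuousLinearMap.inr ℝ (E n) (E n))).continuous
  exact (InnerProductSpace.toDual ℝ (E n)).symm.continuous.comp (hcomp.comp hfd)

end AuxLemmas

/-- For any compactly supported invariant probability measure `μ` of the
λ-discounted flow, `∫ (L(x,∂H/∂p(x,p)) + H(x,p)) dμ = 0`, equivalently
`∫ ⟨p, ∂H/∂p(x,p)⟩ dμ = 0`. -/
theorem stmt_15 {n : ℕ} (hn : 1 ≤ n) (lam : ℝ) (hlam : 0 < lam)
    (H L : E n × E n → ℝ) (hH : Tonelli H) (hLH : IsLagrangianOf L H)
    (Φ : ℝ → E n × E n → E n × E n) (hΦ : IsDiscountedFlow lam H Φ)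
    (μ : Measure (E n × E n)) (hprob : IsProbabilityMeasure μ)
    (hcpt : ∃ K : Set (E n × E n), IsCompact K ∧ μ Kᶜ = 0)
    (hinv : ∀ t : ℝ, Measure.map (Φ t) μ = μ) :
    (∫ z, (L (z.1, Hp H z.1 z.2) + H z) ∂μ) = 0 ∧
    (∫ z, (inner ℝ z.2 (Hp H z.1 z.2) : ℝ) ∂μ) = 0 := by
  have hΦ0 := hΦ.1
  have hΦd := hΦ.2.2
  obtain ⟨K, hK, hKμ⟩ := hcpt
  have hgc : Continuous (fun z : E n × E n => (inner ℝ z.2 (Hp H z.1 z.2) : ℝ)) :=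
    continuous_snd.inner (continuous_Hp H hH.1)
  have hmeas : ∀ t : ℝ, AEMeasurable (Φ t) μ := by
    intro t
    by_contra h
    have h0 := Measure.map_of_not_aemeasurable h
    rw [hinv t] at h0
    exact (IsProbabilityMeasure.ne_zero μ) h0
  have hKae : ∀ᵐ z ∂μ, z ∈ K := mem_ae_iff.2 hKμ
  have horbit : ∀ᵐ z ∂μ, ∀ s : ℝ, Φ s z ∈ K := by
    have hq : ∀ᵐ z ∂μ, ∀ q : ℚ, Φ (q : ℝ) z ∈ K := by
      rw [ae_all_iff]
      intro q
      have h0 : μ (Φ (q : ℝ) ⁻¹' Kᶜ) = 0 := by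
        rw [← Measure.map_apply_of_aemeasurable (hmeas _) hK.isClosed.measurableSet.compl,
          hinv]
        exact hKμ
      exact mem_ae_iff.2 h0
    refine hq.mono fun z hz s => ?_
    have hcont : Continuous (fun s => Φ s z) := by
      have h1 : Continuous (fun s => (Φ s z).1) :=
        continuous_iff_continuousAt.2 fun t => (hΦd z t).1.continuousAt
      have h2 : Continuous (fun s => (Φ s z).2) :=
        continuous_iff_continuousAt.2 fun t => (hΦd z t).2.continuousAt
      exact h1.prodMk h2
    have hclosed : IsClosed ((fun s => Φ s z) ⁻¹' K) := hK.isClosed.preimage hcont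
    have hsub : Set.range ((↑) : ℚ → ℝ) ⊆ (fun s => Φ s z) ⁻¹' K := by
      rintro _ ⟨q, rfl⟩; exact hz q
    have huniv : (Set.univ : Set ℝ) ⊆ (fun s => Φ s z) ⁻¹' K := by
      rw [← Rat.denseRange_cast.closure_range]
      exact hclosed.closure_subset_iff.2 hsub
    exact huniv (mem_univ s)
  obtain ⟨M, hM⟩ := hK.exists_bound_of_continuousOn hgc.continuousOn
  obtain ⟨CH, hCH⟩ := hK.exists_bound_of_continuousOn hH.1.continuous.continuousOn
  -- parametric differentiation
  have hFmeas : ∀ t : ℝ, AEStronglyMeasurable (fun z : E n × E n => H (Φ t z)) μ := fun t =>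
    (hH.1.continuous.measurable.comp_aemeasurable (hmeas t)).aestronglyMeasurable
  have hFint : Integrable (fun z : E n × E n => H (Φ 0 z)) μ := by
    rw [hΦ0]
    refine Integrable.mono' (integrable_const CH) hH.1.continuous.aestronglyMeasurable ?_
    exact hKae.mono fun z hz => hCH z hz
  have hF'meas : AEStronglyMeasurable
      (fun z : E n × E n => -(lam * (inner ℝ (Φ 0 z).2 (Hp H (Φ 0 z).1 (Φ 0 z).2) : ℝ))) μ := by
    rw [hΦ0]
    exact ((continuous_const.mul hgc).neg).aestronglyMeasurable
  have hbound : ∀ᵐ z ∂μ, ∀ t ∈ Metric.ball (0 : ℝ) 1,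
      ‖-(lam * (inner ℝ (Φ t z).2 (Hp H (Φ t z).1 (Φ t z).2) : ℝ))‖ ≤ lam * M := by
    refine horbit.mono fun z hz t _ => ?_
    have h1 : ‖(inner ℝ (Φ t z).2 (Hp H (Φ t z).1 (Φ t z).2) : ℝ)‖ ≤ M := hM _ (hz t)
    rw [norm_neg, norm_mul, Real.norm_of_nonneg hlam.le]
    exact mul_le_mul_of_nonneg_left h1 hlam.le
  have hdiff : ∀ᵐ z ∂μ, ∀ t ∈ Metric.ball (0 : ℝ) 1,
      HasDerivAt (fun s => H (Φ s z))
        (-(lam * (inner ℝ (Φ t z).2 (Hp H (Φ t z).1 (Φ t z).2) : ℝ))) t :=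
    Eventually.of_forall fun z t _ => flow_deriv lam H hH Φ hΦ z t
  obtain ⟨-, hder⟩ := hasDerivAt_integral_of_dominated_loc_of_deriv_le (Metric.ball_mem_nhds 0 one_pos)
    (Eventually.of_forall hFmeas) hFint hF'meas hbound (integrable_const _) hdiff
  have hconst : (fun t => ∫ z, H (Φ t z) ∂μ) = fun _ => ∫ z, H z ∂μ := by
    funext t
    calc ∫ z, H (Φ t z) ∂μ = ∫ z, H z ∂(μ.map (Φ t)) :=
          (integral_map (hmeas t) hH.1.continuous.aestronglyMeasurable).symm
      _ = ∫ z, H z ∂μ := by rw [hinv t]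
  rw [hconst] at hder
  have hzero : (∫ z, -(lam * (inner ℝ (Φ 0 z).2 (Hp H (Φ 0 z).1 (Φ 0 z).2) : ℝ)) ∂μ) = 0 :=
    hder.unique (hasDerivAt_const 0 _)
  rw [hΦ0] at hzero
  simp only [id] at hzero
  rw [integral_neg, neg_eq_zero, integral_const_mul] at hzero
  have hg0 : (∫ z, (inner ℝ z.2 (Hp H z.1 z.2) : ℝ) ∂μ) = 0 :=
    (mul_eq_zero.1 hzero).resolve_left hlam.ne'
  refine ⟨?_, hg0⟩
  have hfun : (fun z : E n × E n => L (z.1, Hp H z.1 z.2) + H z) =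
      (fun z : E n × E n => (inner ℝ z.2 (Hp H z.1 z.2) : ℝ)) :=
    funext fun z => legendre H L hH hLH z.1 z.2
  rw [hfun]
  exact hg0


end
end

section
/- Let H be a Tonelli Hamiltonian on ℝⁿ × ℝⁿ with associated Tonelli Lagrangian L, λ > 0, and let Φᵗ be a complete flow of the λ-discounted Hamiltonian vector field; write Φˢ(x,p) = (x_s, p_s) and v_s = ∂H/∂p(x_s, p_s). Let μ be a Borel probability measure on ℝⁿ × ℝⁿ with compact support, invariant under Φᵗ. Suppose u : ℝⁿ → ℝ is continuous and bounded and satisfies u(x) ≤ ∫_{−∞}^0 e^{λs} L(x_s, v_s) ds for every (x,p) in the support of μ. Then ∫ ( L(x, ∂H/∂p(x,p)) − λ u(x) ) dμ(x,p) ≥ 0. -/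
open Set Filter MeasureTheory Real

noncomputable section

/-- The (topological) support of a measure: points whose every neighbourhood has
positive measure. -/
def msupport {n : ℕ} (μ : Measure (E n × E n)) : Set (E n × E n) :=
  { z | ∀ U ∈ nhds z, 0 < μ U }

-- continuity of the fiber gradient of a C² function
lemma hp_cont {n : ℕ} {H : E n × E n → ℝ} (hH1 : ContDiff ℝ 2 H) :
    Continuous fun z : E n × E n => Hp H z.1 z.2 := by
  have hdiff : Differentiable ℝ H := hH1.differentiable two_ne_zero
  set J : E n →L[ℝ] E n × E n :=
    (0 : E n →L[ℝ] E n).prod (ContinuousLinearMap.id ℝ (E n)) with hJ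
  have key : ∀ z : E n × E n,
      Hp H z.1 z.2 = (InnerProductSpace.toDual ℝ (E n)).symm ((fderiv ℝ H z).comp J) := by
    intro z
    have h1 : HasFDerivAt (fun q : E n => ((z.1, q) : E n × E n)) J z.2 :=
      (hasFDerivAt_const z.1 z.2).prodMk (hasFDerivAt_id z.2)
    have h2 : HasFDerivAt H (fderiv ℝ H z) ((fun q : E n => ((z.1, q) : E n × E n)) z.2) :=
      (hdiff z).hasFDerivAt
    have h3 : HasFDerivAt (fun q : E n => H (z.1, q)) ((fderiv ℝ H z).comp J) z.2 :=
      h2.comp z.2 h1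
    show (InnerProductSpace.toDual ℝ (E n)).symm (fderiv ℝ (fun q : E n => H (z.1, q)) z.2) = _
    rw [h3.fderiv]
  have hc : Continuous fun z : E n × E n =>
      (InnerProductSpace.toDual ℝ (E n)).symm ((fderiv ℝ H z).comp J) :=
    (InnerProductSpace.toDual ℝ (E n)).symm.continuous.comp
      ((hH1.continuous_fderiv two_ne_zero).clm_comp_const J)
  have : (fun z : E n × E n => Hp H z.1 z.2)
      = fun z => (InnerProductSpace.toDual ℝ (E n)).symm ((fderiv ℝ H z).comp J) := funext key
  rw [this]; exact hc

-- lower semicontinuity of the Legendre transform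
lemma lsc_of_isLagrangian {n : ℕ} {L H : E n × E n → ℝ} (hHc : Continuous H)
    (hLH : IsLagrangianOf L H) : LowerSemicontinuous L := by
  intro z c hc
  obtain ⟨r, hrS, hcr, -⟩ := (hLH z.1 z.2).exists_between hc
  obtain ⟨p, rfl⟩ := hrS
  have hφ : Continuous fun w : E n × E n => (inner ℝ p w.2 : ℝ) - H (w.1, p) :=
    (continuous_const.inner continuous_snd).sub
      (hHc.comp (continuous_fst.prodMk continuous_const))
  have hev : ∀ᶠ w in nhds z, c < (inner ℝ p w.2 : ℝ) - H (w.1, p) :=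
    (hφ.tendsto z).eventually (lt_mem_nhds hcr)
  filter_upwards [hev] with w hw
  exact hw.trans_le ((hLH w.1 w.2).1 ⟨p, rfl⟩)

-- complement of the support is null
lemma msupport_compl_null {n : ℕ} (μ : Measure (E n × E n)) : μ (msupport μ)ᶜ = 0 := by
  obtain ⟨T, hTc, hTsub, hTU⟩ :=
    TopologicalSpace.isOpen_sUnion_countable
      {U : Set (E n × E n) | IsOpen U ∧ μ U = 0} (fun U hU => hU.1)
  have hsub : (msupport μ)ᶜ ⊆ ⋃₀ {U : Set (E n × E n) | IsOpen U ∧ μ U = 0} := by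
    intro z hz
    have hz' : ¬ ∀ U ∈ nhds z, 0 < μ U := hz
    push_neg at hz'
    obtain ⟨U, hU, hUpos⟩ := hz'
    have hU0 : μ U = 0 := le_antisymm hUpos zero_le
    obtain ⟨V, hVU, hVo, hzV⟩ := mem_nhds_iff.mp hU
    exact ⟨V, ⟨hVo, measure_mono_null hVU hU0⟩, hzV⟩
  refine measure_mono_null (hTU ▸ hsub) ?_
  exact (measure_sUnion_null_iff hTc).mpr fun s hs => (hTsub hs).2

-- joint a.e.-measurability of the flow
lemma joint_aemeas {n : ℕ} (Φ : ℝ → E n × E n → E n × E n)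
    (hcont : ∀ z, Continuous fun t : ℝ => Φ t z)
    (μ : Measure (E n × E n)) (ν : Measure ℝ) [SFinite ν] [SFinite μ]
    (hmeas : ∀ s : ℝ, AEMeasurable (Φ s) μ) :
    AEMeasurable (fun q : ℝ × (E n × E n) => Φ q.1 q.2) (ν.prod μ) := by
  classical
  set g : ℚ → E n × E n → E n × E n := fun q => (hmeas (q : ℝ)).mk _ with hg
  have hgmeas : ∀ q : ℚ, Measurable (g q) := fun q => (hmeas _).measurable_mk
  have hgae : ∀ q : ℚ, Φ (q : ℝ) =ᵐ[μ] g q := fun q => (hmeas _).ae_eq_mk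
  set r : ℕ → ℝ → ℚ := fun k s => (⌈s * (k + 1)⌉ : ℚ) / ((k : ℚ) + 1) with hr
  have hrmeas : ∀ k : ℕ, Measurable fun s : ℝ => r k s := by
    intro k
    exact (Measurable.of_discrete (f := fun m : ℤ => ((m : ℚ) / ((k : ℚ) + 1)))).comp
      (Int.measurable_ceil.comp (measurable_id.mul_const _))
  have hrtend : ∀ s : ℝ, Tendsto (fun k : ℕ => ((r k s : ℝ))) atTop (nhds s) := by
    intro s
    have h1 : ∀ k : ℕ, s ≤ (r k s : ℝ) := by
      intro k
      have hk : (0 : ℝ) < (k : ℝ) + 1 := by positivity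
      rw [hr]
      push_cast
      rw [le_div_iff₀ hk]
      exact Int.le_ceil _
    have h2 : ∀ k : ℕ, (r k s : ℝ) ≤ s + 1 / ((k : ℝ) + 1) := by
      intro k
      have hk : (0 : ℝ) < (k : ℝ) + 1 := by positivity
      rw [hr]
      push_cast
      rw [div_le_iff₀ hk]
      have hceil := Int.ceil_lt_add_one (s * ((k : ℝ) + 1))
      have : (s + 1 / ((k : ℝ) + 1)) * ((k : ℝ) + 1) = s * ((k : ℝ) + 1) + 1 := by
        field_simp
      linarith
    have hup : Tendsto (fun k : ℕ => s + 1 / ((k : ℝ) + 1)) atTop (nhds s) := by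
      have := tendsto_one_div_add_atTop_nhds_zero_nat (𝕜 := ℝ)
      simpa using tendsto_const_nhds.add this
    exact tendsto_of_tendsto_of_tendsto_of_le_of_le tendsto_const_nhds hup h1 h2
  have hall : ∀ᵐ z ∂μ, ∀ q : ℚ, Φ (q : ℝ) z = g q z := ae_all_iff.mpr fun q => hgae q
  have hprodN : ∀ᵐ p ∂(ν.prod μ), ∀ q : ℚ, Φ (q : ℝ) p.2 = g q p.2 := by
    rw [ae_iff] at hall ⊢
    have hsub : {p : ℝ × (E n × E n) | ¬ ∀ q : ℚ, Φ (q : ℝ) p.2 = g q p.2}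
        ⊆ univ ×ˢ toMeasurable μ {z | ¬ ∀ q : ℚ, Φ (q : ℝ) z = g q z} := by
      intro p hp
      exact ⟨trivial, subset_toMeasurable _ _ hp⟩
    refine measure_mono_null hsub ?_
    rw [Measure.prod_prod, measure_toMeasurable, hall, mul_zero]
  refine aemeasurable_of_tendsto_metrizable_ae atTop
    (f := fun k : ℕ => fun p : ℝ × (E n × E n) => g (r k p.1) p.2) (fun k => ?_) ?_
  · have h1 : Measurable fun w : (E n × E n) × ℚ => g w.2 w.1 :=
      measurable_from_prod_countable_left fun q => hgmeas q
    exact (h1.comp ((measurable_snd).prodMk ((hrmeas k).comp measurable_fst))).aemeasurable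
  · filter_upwards [hprodN] with p hp
    have heq : (fun k : ℕ => g (r k p.1) p.2) = fun k : ℕ => Φ ((r k p.1 : ℝ)) p.2 :=
      funext fun k => (hp _).symm
    rw [heq]
    exact ((hcont p.2).tendsto p.1).comp (hrtend p.1)

/-- If `u(x) ≤ ∫_{-∞}^0 e^{λs} L(x_s,v_s) ds` on the support of a compactly
supported invariant probability measure `μ`, then `∫ (L - λu) dμ ≥ 0`. -/
theorem stmt_16 {n : ℕ} (hn : 1 ≤ n) (lam : ℝ) (hlam : 0 < lam)
    (H L : E n × E n → ℝ) (hH : Tonelli H) (hLH : IsLagrangianOf L H)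
    (Φ : ℝ → E n × E n → E n × E n) (hΦ : IsDiscountedFlow lam H Φ)
    (μ : Measure (E n × E n)) (hprob : IsProbabilityMeasure μ)
    (hcpt : ∃ K : Set (E n × E n), IsCompact K ∧ μ Kᶜ = 0)
    (hinv : ∀ t : ℝ, Measure.map (Φ t) μ = μ)
    (u : E n → ℝ) (huc : Continuous u) (hub : ∃ C : ℝ, ∀ x : E n, |u x| ≤ C)
    (hle : ∀ z ∈ msupport μ,
      u z.1 ≤ ∫ s in Set.Iic (0:ℝ),
        Real.exp (lam * s) * L ((Φ s z).1, Hp H (Φ s z).1 (Φ s z).2)) :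
    0 ≤ ∫ z, (L (z.1, Hp H z.1 z.2) - lam * u z.1) ∂μ := by
  classical
  obtain ⟨K, hK, hKc⟩ := hcpt
  obtain ⟨hH1, -, hHsup⟩ := hH
  set ν : Measure ℝ := volume.restrict (Iic (0:ℝ)) with hν
  set f : E n × E n → ℝ := fun z => L (z.1, Hp H z.1 z.2) with hfdef
  have hHpc : Continuous fun z : E n × E n => Hp H z.1 z.2 := hp_cont hH1
  have hGc : Continuous fun z : E n × E n => ((z.1, Hp H z.1 z.2) : E n × E n) :=
    continuous_fst.prodMk hHpc
  have hLlsc : LowerSemicontinuous L := lsc_of_isLagrangian hH1.continuous hLH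
  have hfm : Measurable f := hLlsc.measurable.comp hGc.measurable
  -- bounds on K
  obtain ⟨R, hR⟩ : ∃ R, ∀ z ∈ K, ‖Hp H z.1 z.2‖ ≤ R :=
    hK.exists_bound_of_continuousOn hHpc.continuousOn
  obtain ⟨B, hB0, hBsup⟩ := hHsup R
  have hupper : ∀ z ∈ K, f z ≤ B := by
    intro z hz
    refine (hLH z.1 (Hp H z.1 z.2)).2 ?_
    rintro rr ⟨p, rfl⟩
    have h1 : (inner ℝ p (Hp H z.1 z.2) : ℝ) ≤ R * ‖p‖ := by
      calc (inner ℝ p (Hp H z.1 z.2) : ℝ) ≤ ‖p‖ * ‖Hp H z.1 z.2‖ := real_inner_le_norm _ _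
        _ ≤ ‖p‖ * R := mul_le_mul_of_nonneg_left (hR z hz) (norm_nonneg p)
        _ = R * ‖p‖ := mul_comm _ _
    have h2 := hBsup z.1 p
    linarith
  obtain ⟨C0, hC0⟩ : ∃ C0, ∀ z ∈ K, ‖H (z.1, (0 : E n))‖ ≤ C0 :=
    hK.exists_bound_of_continuousOn
      ((hH1.continuous.comp (continuous_fst.prodMk continuous_const)).continuousOn)
  have hlower : ∀ z ∈ K, -(H (z.1, 0)) ≤ f z := by
    intro z hz
    exact (hLH z.1 (Hp H z.1 z.2)).1 ⟨0, by simp⟩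
  set M : ℝ := max B C0 with hM
  have hfK : ∀ z ∈ K, |f z| ≤ M := by
    intro z hz
    rw [abs_le]
    constructor
    · have h0 := hC0 z hz
      rw [Real.norm_eq_abs] at h0
      have h1 := (abs_le.mp h0).2
      have h2 := hlower z hz
      have h3 : C0 ≤ M := le_max_right _ _
      linarith
    · exact (hupper z hz).trans (le_max_left _ _)
  -- flow measurability facts
  have haem : ∀ s : ℝ, AEMeasurable (Φ s) μ := by
    intro s
    by_contra hc
    have h1 := hinv s
    rw [Measure.map_of_not_aemeasurable hc] at h1
    have h2 : μ univ = 1 := hprob.measure_univ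
    rw [← h1] at h2
    simp at h2
  have hcontΦ : ∀ z, Continuous fun t : ℝ => Φ t z := by
    intro z
    have h1 : Continuous fun t : ℝ => (Φ t z).1 := by
      rw [continuous_iff_continuousAt]; exact fun t => (hΦ.2.2 z t).1.continuousAt
    have h2 : Continuous fun t : ℝ => (Φ t z).2 := by
      rw [continuous_iff_continuousAt]; exact fun t => (hΦ.2.2 z t).2.continuousAt
    exact h1.prodMk h2
  have hjoint : AEMeasurable (fun q : ℝ × (E n × E n) => Φ q.1 q.2) (ν.prod μ) :=
    joint_aemeas Φ hcontΦ μ ν haem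
  have hKm : MeasurableSet K := hK.isClosed.measurableSet
  have haeK : ∀ s : ℝ, ∀ᵐ z ∂μ, Φ s z ∈ K := by
    intro s
    have h0 : μ ((Φ s) ⁻¹' Kᶜ) = 0 := by
      rw [← Measure.map_apply_of_aemeasurable (haem s) hKm.compl, hinv s]
      exact hKc
    rw [ae_iff]
    exact h0
  -- the integrand on the product space
  set F : ℝ × (E n × E n) → ℝ := fun q => Real.exp (lam * q.1) * f (Φ q.1 q.2) with hFdef
  have hFaesm : AEStronglyMeasurable F (ν.prod μ) := by
    have h1 : AEMeasurable (fun q : ℝ × (E n × E n) => f (Φ q.1 q.2)) (ν.prod μ) :=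
      hfm.comp_aemeasurable hjoint
    exact ((Real.continuous_exp.comp (continuous_const.mul continuous_fst)).aemeasurable.mul
      h1).aestronglyMeasurable
  -- exp integrability and value
  have hexpint : IntegrableOn (fun s : ℝ => Real.exp (lam * s)) (Iic (0:ℝ)) := by
    have m : MeasurableEmbedding fun x : ℝ => -x :=
      (Homeomorph.neg ℝ).measurableEmbedding
    rw [IntegrableOn, ← Measure.map_neg_eq_self (volume : Measure ℝ),
      Measure.restrict_map m.measurable measurableSet_Iic, m.integrable_map_iff]
    have : ((fun s : ℝ => Real.exp (lam * s)) ∘ fun x : ℝ => -x)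
        = fun x : ℝ => Real.exp (-lam * x) := by
      funext x; simp [Function.comp, mul_neg, neg_mul]
    rw [this]
    have hpre : (fun x : ℝ => -x) ⁻¹' Iic (0:ℝ) = Ici (0:ℝ) := by
      ext x; simp
    rw [hpre]
    exact (integrableOn_Ici_iff_integrableOn_Ioi).mpr (exp_neg_integrableOn_Ioi 0 hlam)
  have hexpval : (∫ s in Iic (0:ℝ), Real.exp (lam * s)) = 1 / lam := by
    have hd : ∀ x ∈ Iic (0:ℝ), HasDerivAt (fun s => Real.exp (lam * s) / lam)
        (Real.exp (lam * x)) x := by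
      intro x _
      have h1 : HasDerivAt (fun s : ℝ => lam * s) lam x := by
        simpa using (hasDerivAt_id x).const_mul lam
      have h3 := h1.exp.div_const lam
      rwa [mul_div_cancel_right₀ _ hlam.ne'] at h3
    have htend : Tendsto (fun s => Real.exp (lam * s) / lam) atBot (nhds 0) := by
      have h1 : Tendsto (fun s : ℝ => lam * s) atBot atBot :=
        Tendsto.const_mul_atBot hlam tendsto_id
      have := (Real.tendsto_exp_atBot.comp h1).div_const lam
      simpa using this
    have := integral_Iic_of_hasDerivAt_of_tendsto' hd hexpint htend
    simpa using this
  -- sections: integrability and bounds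
  have hsint : ∀ s : ℝ, Integrable (fun z => F (s, z)) μ := by
    intro s
    have hsm : AEStronglyMeasurable (fun z => F (s, z)) μ :=
      ((hfm.comp_aemeasurable (haem s)).const_mul (Real.exp (lam * s))).aestronglyMeasurable
    refine Integrable.mono' (integrable_const (Real.exp (lam * s) * M)) hsm ?_
    filter_upwards [haeK s] with z hz
    rw [Real.norm_eq_abs, hFdef]
    simp only
    rw [abs_mul, abs_of_pos (Real.exp_pos _)]
    exact mul_le_mul_of_nonneg_left (hfK _ hz) (Real.exp_pos _).le
  have hsbound : ∀ s : ℝ, (∫ z, ‖F (s, z)‖ ∂μ) ≤ Real.exp (lam * s) * M := by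
    intro s
    calc (∫ z, ‖F (s, z)‖ ∂μ) ≤ ∫ _z, Real.exp (lam * s) * M ∂μ := by
          refine integral_mono_ae (hsint s).norm (integrable_const _) ?_
          filter_upwards [haeK s] with z hz
          rw [Real.norm_eq_abs, hFdef]
          simp only
          rw [abs_mul, abs_of_pos (Real.exp_pos _)]
          exact mul_le_mul_of_nonneg_left (hfK _ hz) (Real.exp_pos _).le
      _ = Real.exp (lam * s) * M := by
          rw [integral_const]; simp
  have hFint : Integrable F (ν.prod μ) := by
    rw [integrable_prod_iff hFaesm]
    constructor
    · exact Eventually.of_forall hsint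
    · refine Integrable.mono' (hexpint.mul_const M) hFaesm.norm.integral_prod_right' ?_
      refine Eventually.of_forall fun s => ?_
      rw [Real.norm_eq_abs, abs_of_nonneg (integral_nonneg fun z => norm_nonneg _)]
      exact hsbound s
  -- Fubini and invariance
  have hinner : ∀ s : ℝ, (∫ z, F (s, z) ∂μ) = Real.exp (lam * s) * ∫ z, f z ∂μ := by
    intro s
    have hsm' : AEStronglyMeasurable f (Measure.map (Φ s) μ) := hfm.aestronglyMeasurable
    have h1 : (∫ z, f (Φ s z) ∂μ) = ∫ z, f z ∂μ := by
      rw [← integral_map (haem s) hsm', hinv s]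
    calc (∫ z, F (s, z) ∂μ) = ∫ z, Real.exp (lam * s) * f (Φ s z) ∂μ := rfl
      _ = Real.exp (lam * s) * ∫ z, f (Φ s z) ∂μ := integral_const_mul _ _
      _ = Real.exp (lam * s) * ∫ z, f z ∂μ := by rw [h1]
  have hswap := integral_integral_swap (f := fun s z => F (s, z)) (μ := ν) (ν := μ) hFint
  have hGint : Integrable (fun z => ∫ s, F (s, z) ∂ν) μ := hFint.integral_prod_right
  have hGval : (∫ z, (∫ s, F (s, z) ∂ν) ∂μ) = (∫ z, f z ∂μ) / lam := by
    rw [← hswap]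
    calc (∫ s, (∫ z, F (s, z) ∂μ) ∂ν)
        = ∫ s, Real.exp (lam * s) * ∫ z, f z ∂μ ∂ν :=
          integral_congr_ae (Eventually.of_forall fun s => hinner s)
      _ = (∫ s, Real.exp (lam * s) ∂ν) * ∫ z, f z ∂μ := integral_mul_const _ _
      _ = (1 / lam) * ∫ z, f z ∂μ := by rw [hν, hexpval]
      _ = (∫ z, f z ∂μ) / lam := by ring
  -- u-side
  obtain ⟨Cu, hCu⟩ := hub
  have huint : Integrable (fun z : E n × E n => lam * u z.1) μ := by
    refine Integrable.mono' (integrable_const (lam * Cu))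
      ((continuous_const.mul (huc.comp continuous_fst)).aestronglyMeasurable) ?_
    refine Eventually.of_forall fun z => ?_
    rw [Real.norm_eq_abs, abs_mul, abs_of_pos hlam]
    exact mul_le_mul_of_nonneg_left (hCu z.1) hlam.le
  have hsupp : ∀ᵐ z ∂μ, z ∈ msupport μ := by
    rw [ae_iff]
    exact msupport_compl_null μ
  have hmono : ∀ᵐ z ∂μ, lam * u z.1 ≤ lam * ∫ s, F (s, z) ∂ν := by
    filter_upwards [hsupp] with z hz
    exact mul_le_mul_of_nonneg_left (hle z hz) hlam.le
  have hfint : Integrable f μ := by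
    refine Integrable.mono' (integrable_const M) hfm.aestronglyMeasurable ?_
    have haeK0 : ∀ᵐ z ∂μ, z ∈ K := by rw [ae_iff]; exact hKc
    filter_upwards [haeK0] with z hz
    rw [Real.norm_eq_abs]
    exact hfK z hz
  have hfinal : (∫ z, lam * u z.1 ∂μ) ≤ ∫ z, f z ∂μ := by
    have h1 : (∫ z, lam * u z.1 ∂μ) ≤ ∫ z, lam * ∫ s, F (s, z) ∂ν ∂μ :=
      integral_mono_ae huint (hGint.const_mul lam) hmono
    have h2 : (∫ z, lam * ∫ s, F (s, z) ∂ν ∂μ) = ∫ z, f z ∂μ := by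
      rw [integral_const_mul, hGval]
      field_simp
    linarith
  show 0 ≤ ∫ z, (f z - lam * u z.1) ∂μ
  rw [integral_sub hfint huint]
  linarith


end
end
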